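/- For every separable state ρ on ℋ_A ⊗ ℋ_B and every δ > 0 there exist N ≥ 1 and an operator σ ∈ 𝒮̃^N with tr σ = 1 such that ‖ρ − σ‖₁ < δ. Consequently, the union over N of the sets 𝒮̃^N is trace-norm dense in the set of separable states (convergence of the inner approximation). -/

import Mathlib

open Matrix MeasureTheory
open scoped Kronecker BigOperators ENNReal ComplexOrder

noncomputable section

namespace SepPaper

/-- The rank-one operator `|ψ⟩⟨ψ|`. -/
def proj {n : Type*} (ψ : n → ℂ) : Matrix n n ℂ := Matrix.vecMulVec ψ (star ψ)

/-- `Λ` is a separable operator on `ℂ^{dA} ⊗ ℂ^{d}`: a finite conical combination of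
pure product operators `|ψ⟩⟨ψ| ⊗ |φ⟩⟨φ|`. -/
def IsSeparable (dA d : ℕ) (Λ : Matrix (Fin dA × Fin d) (Fin dA × Fin d) ℂ) : Prop :=
  ∃ (k : ℕ) (c : Fin k → ℝ) (ψ : Fin k → (Fin dA → ℂ)) (φ : Fin k → (Fin d → ℂ)),
    (∀ i, 0 ≤ c i) ∧
    Λ = ∑ i, (c i : ℂ) • (proj (ψ i) ⊗ₖ proj (φ i))

/-- Partial trace over the `B` system. -/
def trB {dA d : ℕ} (M : Matrix (Fin dA × Fin d) (Fin dA × Fin d) ℂ) :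
    Matrix (Fin dA) (Fin dA) ℂ :=
  fun a a' => ∑ b : Fin d, M (a, b) (a', b)

/-- Index type of `ℋ_A ⊗ ℋ_B ⊗ ℋ_B^{⊗(N-1)} = ℋ_A ⊗ ℋ_B^{⊗N}` (for `N ≥ 1`). -/
abbrev ExtIdx (dA d N : ℕ) := Fin dA × Fin d × (Fin (N - 1) → Fin d)

/-- The orthogonal projector onto the symmetric subspace of `(ℂ^d)^{⊗N}`,
realized as the average of all permutation operators. -/
def symProj (d N : ℕ) : Matrix (Fin N → Fin d) (Fin N → Fin d) ℂ :=
  (N.factorial : ℂ)⁻¹ •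
    ∑ π : Equiv.Perm (Fin N), Matrix.of (fun f g => if (fun i => g (π i)) = f then (1 : ℂ) else 0)

/-- Identification of `ℂ^d ⊗ (ℂ^d)^{⊗(N-1)}` with `(ℂ^d)^{⊗((N-1)+1)}`. -/
def bEquiv (d N : ℕ) : (Fin d × (Fin (N - 1) → Fin d)) ≃ (Fin (N - 1 + 1) → Fin d) :=
  Fin.consEquiv (fun _ => Fin d)

/-- The symmetric projector on the `N = (N-1)+1` copies of `ℂ^d`,
viewed on the index type `Fin d × (Fin (N-1) → Fin d)`. -/
def symProjB (d N : ℕ) : Matrix (Fin d × (Fin (N - 1) → Fin d)) (Fin d × (Fin (N - 1) → Fin d)) ℂ :=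
  Matrix.reindex (bEquiv d N).symm (bEquiv d N).symm (symProj d (N - 1 + 1))

/-- Partial trace over the last `N-1` copies of `ℋ_B`. -/
def ptraceExt {dA d N : ℕ} (M : Matrix (ExtIdx dA d N) (ExtIdx dA d N) ℂ) :
    Matrix (Fin dA × Fin d) (Fin dA × Fin d) ℂ :=
  fun p q => ∑ g : Fin (N - 1) → Fin d, M (p.1, p.2, g) (q.1, q.2, g)

/-- Membership in `𝒮^N`: existence of a positive semidefinite Bose-symmetric
`N`-extension. -/
def MemSN (dA d N : ℕ) (Λ : Matrix (Fin dA × Fin d) (Fin dA × Fin d) ℂ) : Prop :=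
  ∃ Λext : Matrix (ExtIdx dA d N) (ExtIdx dA d N) ℂ,
    Λext.PosSemidef ∧ ptraceExt Λext = Λ ∧
    Λext * ((1 : Matrix (Fin dA) (Fin dA) ℂ) ⊗ₖ symProjB d N) = Λext

/-- Partial transpose of an operator on `ℋ_A ⊗ ℋ_B^{⊗N}` w.r.t. the bipartition
`(A and the first ⌈N/2⌉ copies of B) | (the last ⌊N/2⌋ copies of B)`.
Copy `0` of `B` is the explicit factor and the extra copy `i : Fin (N-1)` is copy
`i+1`; copy `j` is transposed iff `⌈N/2⌉ = (N+1)/2 ≤ j`. -/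
def pt {dA d N : ℕ} (M : Matrix (ExtIdx dA d N) (ExtIdx dA d N) ℂ) :
    Matrix (ExtIdx dA d N) (ExtIdx dA d N) ℂ :=
  fun p q =>
    M (p.1, p.2.1, fun i => if (N + 1) / 2 ≤ (i : ℕ) + 1 then q.2.2 i else p.2.2 i)
      (q.1, q.2.1, fun i => if (N + 1) / 2 ≤ (i : ℕ) + 1 then p.2.2 i else q.2.2 i)

/-- Membership in `𝒮_p^N`: existence of a positive semidefinite Bose-symmetric
`N`-extension which is moreover PPT w.r.t. the bipartition
`A B^{⌈N/2⌉} | B^{⌊N/2⌋}`. -/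
def MemSNp (dA d N : ℕ) (Λ : Matrix (Fin dA × Fin d) (Fin dA × Fin d) ℂ) : Prop :=
  ∃ Λext : Matrix (ExtIdx dA d N) (ExtIdx dA d N) ℂ,
    Λext.PosSemidef ∧ ptraceExt Λext = Λ ∧
    Λext * ((1 : Matrix (Fin dA) (Fin dA) ℂ) ⊗ₖ symProjB d N) = Λext ∧
    (pt Λext).PosSemidef

/-- Membership in `𝒮̃^N = {(N/(N+d)) σ + (1/(N+d)) σ_A ⊗ 𝕀_B : σ ∈ 𝒮^N}`. -/
def MemStildeN (dA d N : ℕ) (Λ : Matrix (Fin dA × Fin d) (Fin dA × Fin d) ℂ) : Prop :=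
  ∃ σ, MemSN dA d N σ ∧
    Λ = ((N : ℂ) / ((N : ℂ) + d)) • σ +
        (1 / ((N : ℂ) + d)) • (trB σ ⊗ₖ (1 : Matrix (Fin d) (Fin d) ℂ))

/-- The Jacobi polynomial `P_n^{(α,β)}` (for natural parameters `α, β`). -/
def jacobiP (n α β : ℕ) (x : ℝ) : ℝ :=
  ∑ s ∈ Finset.range (n + 1),
    (Nat.choose (n + α) (n - s) : ℝ) * (Nat.choose (n + β) s : ℝ) *
      ((x - 1) / 2) ^ s * ((x + 1) / 2) ^ (n - s)

/-- `ε_N = (d/(2(d-1))) · min {1 - x : P_{⌊N/2⌋+1}^{(d-2, N mod 2)}(x) = 0}`. -/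
def epsN (d N : ℕ) : ℝ :=
  ((d : ℝ) / (2 * ((d : ℝ) - 1))) *
    sInf {y : ℝ | ∃ x : ℝ, y = 1 - x ∧ jacobiP (N / 2 + 1) (d - 2) (N % 2) x = 0}

/-- Membership in `𝒮̃_p^N = {(1-ε_N) σ + ε_N σ_A ⊗ 𝕀_B/d : σ ∈ 𝒮_p^N}`. -/
def MemStildeNp (dA d N : ℕ) (Λ : Matrix (Fin dA × Fin d) (Fin dA × Fin d) ℂ) : Prop :=
  ∃ σ, MemSNp dA d N σ ∧
    Λ = ((1 : ℂ) - (epsN d N : ℂ)) • σ +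
        ((epsN d N : ℂ) / d) • (trB σ ⊗ₖ (1 : Matrix (Fin d) (Fin d) ℂ))

/-- The positive semidefinite square root of a positive semidefinite matrix
(the definition of `Matrix.PosSemidef.sqrt` in the older Mathlib). -/
def PosSemidef.sqrt {n : Type*} [Fintype n] [DecidableEq n] {A : Matrix n n ℂ}
    (hA : A.PosSemidef) : Matrix n n ℂ :=
  hA.1.eigenvectorUnitary.1 * diagonal ((↑) ∘ Real.sqrt ∘ hA.1.eigenvalues) *
    (star hA.1.eigenvectorUnitary : Matrix n n ℂ)

/-- The trace norm `‖Z‖₁ = tr √(Z Zᴴ)`. -/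
def traceNorm {n : Type*} [Fintype n] [DecidableEq n] (Z : Matrix n n ℂ) : ℝ :=
  ((PosSemidef.sqrt (Matrix.posSemidef_self_mul_conjTranspose Z)).trace).re

/-- The operator norm `‖Z‖_∞` (largest singular value), as the norm of the induced
operator on Euclidean space. -/
def opNorm {n : Type*} [Fintype n] [DecidableEq n] (Z : Matrix n n ℂ) : ℝ :=
  ‖LinearMap.toContinuousLinearMap (Matrix.toEuclideanLin Z)‖

/-- `(|φ⟩⟨φ|)^{⊗N}` on `ℋ_B^{⊗N} = ℋ_B ⊗ ℋ_B^{⊗(N-1)}`. -/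
def projPowExt {d : ℕ} (N : ℕ) (φ : Fin d → ℂ) :
    Matrix (Fin d × (Fin (N - 1) → Fin d)) (Fin d × (Fin (N - 1) → Fin d)) ℂ :=
  fun p q => proj φ p.1 q.1 * ∏ i, proj φ (p.2 i) (q.2 i)

/-- The optimal fidelity `F = sup {tr(ρ Λ) : Λ ∈ 𝒮, tr_B Λ = 𝕀_A}`. -/
def fid (dA d : ℕ) (ρ : Matrix (Fin dA × Fin d) (Fin dA × Fin d) ℂ) : ℝ :=
  sSup {r : ℝ | ∃ Λ, IsSeparable dA d Λ ∧ trB Λ = 1 ∧ r = ((ρ * Λ).trace).re}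

/-- `F̃^N = sup {tr(ρ Λ) : Λ ∈ 𝒮̃^N, tr_B Λ = 𝕀_A}`. -/
def fidTildeN (dA d N : ℕ) (ρ : Matrix (Fin dA × Fin d) (Fin dA × Fin d) ℂ) : ℝ :=
  sSup {r : ℝ | ∃ Λ, MemStildeN dA d N Λ ∧ trB Λ = 1 ∧ r = ((ρ * Λ).trace).re}

/-- `F̃_p^N = sup {tr(ρ Λ) : Λ ∈ 𝒮̃_p^N, tr_B Λ = 𝕀_A}`. -/
def fidTildeNp (dA d N : ℕ) (ρ : Matrix (Fin dA × Fin d) (Fin dA × Fin d) ℂ) : ℝ :=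
  sSup {r : ℝ | ∃ Λ, MemStildeNp dA d N Λ ∧ trB Λ = 1 ∧ r = ((ρ * Λ).trace).re}

/-- Robustness relative to a set `T` of operators:
`R_T(ρ) = inf {tr σ : σ ∈ T, ρ + σ ∈ T}` (with `inf ∅ = +∞`). -/
def rob {dA d : ℕ} (T : Set (Matrix (Fin dA × Fin d) (Fin dA × Fin d) ℂ))
    (ρ : Matrix (Fin dA × Fin d) (Fin dA × Fin d) ℂ) : ℝ≥0∞ :=
  sInf {t : ℝ≥0∞ | ∃ σ ∈ T, ρ + σ ∈ T ∧ t = ENNReal.ofReal ((σ.trace).re)}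



/-! ### Auxiliary lemmas -/

section Aux

section SqrtAux
open scoped MatrixOrder
lemma psdSqrt_eq_cfc {n : Type*} [Fintype n] [DecidableEq n] {A : Matrix n n ℂ}
    (hA : A.PosSemidef) : PosSemidef.sqrt hA = CFC.sqrt A := by
  rw [CFC.sqrt_eq_cfc, cfc_nnreal_eq_real _ A hA.nonneg, hA.1.cfc_eq]
  simp only [IsHermitian.cfc, Unitary.conjStarAlgAut_apply, PosSemidef.sqrt]
  congr 3
  funext x
  simp only [Function.comp_apply, Real.coe_sqrt, Real.coe_toNNReal']
  rw [max_eq_left (hA.eigenvalues_nonneg x)]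
  congr
lemma psdSqrt_posSemidef {n : Type*} [Fintype n] [DecidableEq n] {A : Matrix n n ℂ}
    (hA : A.PosSemidef) : (PosSemidef.sqrt hA).PosSemidef := by
  rw [psdSqrt_eq_cfc]; exact (CFC.sqrt_nonneg A).posSemidef
lemma psdSqrt_sq {n : Type*} [Fintype n] [DecidableEq n] {A : Matrix n n ℂ}
    (hA : A.PosSemidef) : (PosSemidef.sqrt hA) ^ 2 = A := by
  rw [psdSqrt_eq_cfc]; exact CFC.sq_sqrt A hA.nonneg
lemma psdSqrt_eq_of_sq_eq {n : Type*} [Fintype n] [DecidableEq n] {A B : Matrix n n ℂ}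
    (hA : A.PosSemidef) (hB : B.PosSemidef) (hAB : A ^ 2 = B) : A = PosSemidef.sqrt hB := by
  rw [psdSqrt_eq_cfc, ← hAB]; exact (CFC.sqrt_sq A hA.nonneg).symm
end SqrtAux

lemma posSemidef_proj {n : Type*} [Fintype n] (v : n → ℂ) : (proj v).PosSemidef := by
  have h : proj v = Matrix.replicateCol Unit v * (Matrix.replicateCol Unit v)ᴴ := by
    ext i j
    simp [proj, Matrix.mul_apply, Matrix.vecMulVec_apply, Matrix.conjTranspose_apply]
  rw [h]; exact Matrix.posSemidef_self_mul_conjTranspose _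

lemma posSemidef_smul_real {n : Type*} [Fintype n] {M : Matrix n n ℂ} (hM : M.PosSemidef)
    {r : ℝ} (hr : 0 ≤ r) : ((r:ℂ) • M).PosSemidef := by
  constructor
  · unfold Matrix.IsHermitian
    rw [Matrix.conjTranspose_smul, hM.1]
    congr 1
    simp [Complex.star_def, Complex.conj_ofReal]
  · exact (hM.smul (a := (r:ℂ)) (by exact_mod_cast hr)).2

lemma trace_nonneg_of_psd {n : Type*} [Fintype n] [DecidableEq n] {M : Matrix n n ℂ}
    (hM : M.PosSemidef) : 0 ≤ M.trace := by
  classical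
  apply Finset.sum_nonneg
  intro i _
  exact hM.diag_nonneg

lemma traceNorm_real_smul {n : Type*} [Fintype n] [DecidableEq n] (Z : Matrix n n ℂ)
    {r : ℝ} (hr : 0 ≤ r) : traceNorm ((r:ℂ) • Z) = r * traceNorm Z := by
  have hP := Matrix.posSemidef_self_mul_conjTranspose Z
  have hQ := Matrix.posSemidef_self_mul_conjTranspose ((r:ℂ) • Z)
  have hsq : ((r:ℂ) • PosSemidef.sqrt hP) ^ 2 = ((r:ℂ) • Z) * ((r:ℂ) • Z)ᴴ := by
    rw [smul_pow, psdSqrt_sq hP, Matrix.conjTranspose_smul, Matrix.smul_mul, Matrix.mul_smul,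
      smul_smul]
    congr 1
    simp [Complex.star_def, Complex.conj_ofReal, sq]
  have heq : (r:ℂ) • PosSemidef.sqrt hP = PosSemidef.sqrt hQ :=
    psdSqrt_eq_of_sq_eq (posSemidef_smul_real (psdSqrt_posSemidef hP) hr) hQ hsq
  unfold traceNorm
  rw [← heq, Matrix.trace_smul]
  simp

lemma proj_prodvec_mul_symProj (d M : ℕ) (u : Fin d → ℂ) :
    proj (fun f : Fin M → Fin d => ∏ j, u (f j)) * symProj d M
      = proj (fun f : Fin M → Fin d => ∏ j, u (f j)) := by
  classical
  ext f g
  rw [Matrix.mul_apply]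
  simp only [symProj, Matrix.smul_apply, Matrix.sum_apply, Matrix.of_apply, smul_eq_mul,
    Finset.mul_sum, proj, Matrix.vecMulVec_apply, Pi.star_apply]
  rw [Finset.sum_comm]
  have hterm : ∀ π : Equiv.Perm (Fin M),
      (∑ h : Fin M → Fin d, (∏ j, u (f j)) * star (∏ j, u (h j)) *
        ((M.factorial : ℂ)⁻¹ * if (fun i => g (π i)) = h then (1:ℂ) else 0))
      = (M.factorial : ℂ)⁻¹ * ((∏ j, u (f j)) * star (∏ j, u (g j))) := by
    intro π
    rw [Finset.sum_eq_single (fun i => g (π i))]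
    · have h2 : (∏ j, u (g (π j))) = ∏ j, u (g j) := Equiv.prod_comp π fun j => u (g j)
      simp only [if_pos rfl, mul_one, h2, if_true]
      ring
    · intro h _ hne
      rw [if_neg (Ne.symm hne)]
      ring
    · intro habs; exact absurd (Finset.mem_univ _) habs
  rw [Finset.sum_congr rfl fun π _ => hterm π, Finset.sum_const]
  simp only [Finset.card_univ, Fintype.card_perm, Fintype.card_fin, nsmul_eq_mul]
  rw [← mul_assoc, mul_inv_cancel₀ (by exact_mod_cast M.factorial_ne_zero), one_mul]

lemma proj_prod_split {α β : Type*} (u : α → ℂ) (v : β → ℂ) :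
    proj (fun p : α × β => u p.1 * v p.2) = proj u ⊗ₖ proj v := by
  ext ⟨a, p⟩ ⟨a', p'⟩
  simp only [proj, Matrix.vecMulVec_apply, Pi.star_apply, Matrix.kroneckerMap_apply,
    StarMul.star_mul]
  ring

lemma proj_phi_mul_symProjB (d N : ℕ) (u : Fin d → ℂ) :
    proj (fun p : Fin d × (Fin (N-1) → Fin d) => u p.1 * ∏ i, u (p.2 i)) * symProjB d N
      = proj (fun p : Fin d × (Fin (N-1) → Fin d) => u p.1 * ∏ i, u (p.2 i)) := by
  classical
  set e := bEquiv d N with he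
  have hΦ : (fun p : Fin d × (Fin (N-1) → Fin d) => u p.1 * ∏ i, u (p.2 i))
      = fun p => ∏ j, u ((e p) j) := by
    funext p
    show u p.1 * ∏ i, u (p.2 i) = ∏ j : Fin (N-1+1), u ((bEquiv d N) p j)
    have hc : (bEquiv d N) p = (Fin.cons p.1 p.2 : Fin (N-1+1) → Fin d) := rfl
    rw [hc, Fin.prod_univ_succ]
    simp
  rw [hΦ]
  have hre : proj (fun p : Fin d × (Fin (N-1) → Fin d) => ∏ j, u ((e p) j))
      = Matrix.reindex e.symm e.symm (proj (fun f : Fin (N-1+1) → Fin d => ∏ j, u (f j))) := by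
    ext p q
    simp [proj, Matrix.vecMulVec_apply, Matrix.reindex_apply, Matrix.submatrix_apply]
  rw [hre, symProjB]
  rw [Matrix.reindex_apply, Matrix.reindex_apply, Matrix.submatrix_mul_equiv]
  rw [proj_prodvec_mul_symProj]

lemma posSemidef_sum {ι : Type*} {n : Type*} [Fintype n] (s : Finset ι)
    (f : ι → Matrix n n ℂ) (h : ∀ i ∈ s, (f i).PosSemidef) : (∑ i ∈ s, f i).PosSemidef := by
  classical
  induction s using Finset.induction with
  | empty => simpa using Matrix.PosSemidef.zero
  | @insert a s ha ih =>
    rw [Finset.sum_insert ha]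
    exact (h a (Finset.mem_insert_self _ _)).add (ih fun i hi => h i (Finset.mem_insert_of_mem hi))

lemma trace_trB {dA d : ℕ} (M : Matrix (Fin dA × Fin d) (Fin dA × Fin d) ℂ) :
    (trB M).trace = M.trace := by
  rw [Matrix.trace, Matrix.trace, Fintype.sum_prod_type]
  rfl

lemma ptraceExt_proj_term {dA d N : ℕ} (s : ℝ) (ψ : Fin dA → ℂ) (φ : Fin d → ℂ) :
    ptraceExt (N := N) (proj (fun p : ExtIdx dA d N =>
        ((s:ℂ) * ψ p.1) * (φ p.2.1 * ∏ j, φ (p.2.2 j))))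
      = ((s^2 * (∑ b, Complex.normSq (φ b))^(N-1) : ℝ) : ℂ) • (proj ψ ⊗ₖ proj φ) := by
  classical
  ext ⟨a, b⟩ ⟨a', b'⟩
  simp only [ptraceExt, proj, Matrix.vecMulVec_apply, Pi.star_apply, Matrix.smul_apply,
    Matrix.kroneckerMap_apply, smul_eq_mul]
  have hsummand : ∀ g : Fin (N-1) → Fin d,
      (((s:ℂ) * ψ a) * (φ b * ∏ j, φ (g j))) * star (((s:ℂ) * ψ a') * (φ b' * ∏ j, φ (g j)))
      = ((((s:ℂ) * (s:ℂ)) * (ψ a * star (ψ a')) * (φ b * star (φ b'))) *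
          ∏ j, (φ (g j) * star (φ (g j)))) := by
    intro g
    simp only [StarMul.star_mul, Complex.star_def, Complex.conj_ofReal]
    rw [show (starRingEnd ℂ) (∏ j, φ (g j)) = ∏ j, (starRingEnd ℂ) (φ (g j)) from
      star_prod _ _]
    rw [Finset.prod_mul_distrib]
    ring
  rw [Finset.sum_congr rfl fun g _ => hsummand g, ← Finset.mul_sum]
  have key : (∑ g : Fin (N-1) → Fin d, ∏ j, (φ (g j) * star (φ (g j))))
      = (((∑ b, Complex.normSq (φ b)) : ℝ) : ℂ)^(N-1) := by
    rw [← Fintype.sum_pow (fun b => φ b * star (φ b)) (N-1)]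
    congr 1
    push_cast
    refine Finset.sum_congr rfl fun x _ => ?_
    rw [Complex.star_def, Complex.mul_conj]
  rw [key]
  push_cast
  ring

lemma memSN_of_isSeparable {dA d N : ℕ} {ρ : Matrix (Fin dA × Fin d) (Fin dA × Fin d) ℂ}
    (h : IsSeparable dA d ρ) : MemSN dA d N ρ := by
  classical
  obtain ⟨k, c, ψ, φ, hc, hρ⟩ := h
  set nrm : Fin k → ℝ := fun i => ∑ b, Complex.normSq (φ i b) with hnrm
  have hnrm_nonneg : ∀ i, 0 ≤ nrm i := fun i =>
    Finset.sum_nonneg fun b _ => Complex.normSq_nonneg _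
  set coef : Fin k → ℝ := fun i => if nrm i = 0 then 0 else c i / (nrm i)^(N-1) with hcoef
  have hcoef_nonneg : ∀ i, 0 ≤ coef i := by
    intro i
    rw [hcoef]
    dsimp only
    split
    · exact le_refl 0
    · exact div_nonneg (hc i) (pow_nonneg (hnrm_nonneg i) _)
  set w : Fin k → (ExtIdx dA d N → ℂ) := fun i p =>
    ((Real.sqrt (coef i) : ℂ) * ψ i p.1) * (φ i p.2.1 * ∏ j, φ i (p.2.2 j)) with hw
  refine ⟨∑ i, proj (w i), ?_, ?_, ?_⟩
  · exact posSemidef_sum _ _ fun i _ => posSemidef_proj _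
  · have hlin : ptraceExt (∑ i, proj (w i)) = ∑ i, ptraceExt (proj (w i)) := by
      ext p q
      simp only [ptraceExt, Matrix.sum_apply]
      rw [Finset.sum_comm]
    rw [hlin, hρ]
    refine Finset.sum_congr rfl fun i _ => ?_
    have hterm := ptraceExt_proj_term (N := N) (Real.sqrt (coef i)) (ψ i) (φ i)
    have hsq : Real.sqrt (coef i) ^ 2 = coef i := Real.sq_sqrt (hcoef_nonneg i)
    rw [hw]
    rw [hterm, hsq]
    by_cases h0 : nrm i = 0
    · have hφ0 : φ i = 0 := by
        funext b
        have hb : Complex.normSq (φ i b) = 0 := by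
          have := (Finset.sum_eq_zero_iff_of_nonneg
            (fun b _ => Complex.normSq_nonneg (φ i b))).mp h0 b (Finset.mem_univ b)
          exact this
        exact Complex.normSq_eq_zero.mp hb
      have hproj0 : proj (φ i) = 0 := by
        ext x y
        simp [proj, Matrix.vecMulVec_apply, hφ0]
      rw [hproj0]
      have hk0 : (proj (ψ i) ⊗ₖ (0 : Matrix (Fin d) (Fin d) ℂ)) = 0 := by
        ext ⟨x1, x2⟩ ⟨y1, y2⟩
        simp [Matrix.kroneckerMap_apply]
      rw [hk0, smul_zero, smul_zero]
    · have : coef i * nrm i ^ (N-1) = c i := by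
        rw [hcoef]
        dsimp only
        rw [if_neg h0]
        field_simp
      rw [hnrm] at this
      rw [this]
  · rw [Finset.sum_mul]
    refine Finset.sum_congr rfl fun i _ => ?_
    have hsplit : proj (w i) = proj (fun a => (Real.sqrt (coef i) : ℂ) * ψ i a) ⊗ₖ
        proj (fun q : Fin d × (Fin (N-1) → Fin d) => φ i q.1 * ∏ j, φ i (q.2 j)) := by
      rw [hw]
      exact proj_prod_split (fun a => (Real.sqrt (coef i) : ℂ) * ψ i a)
        (fun q : Fin d × (Fin (N-1) → Fin d) => φ i q.1 * ∏ j, φ i (q.2 j))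
    rw [hsplit, ← Matrix.mul_kronecker_mul, Matrix.mul_one, proj_phi_mul_symProjB]

end Aux

/-- for every separable state `ρ` and every `δ > 0` there are `N ≥ 1`
and a normalized `σ ∈ 𝒮̃^N` with `‖ρ - σ‖₁ < δ`: the union of the sets `𝒮̃^N` is
trace-norm dense in the set of separable states. -/
theorem stmt17 (dA d : ℕ) (hdA : 1 ≤ dA) (hd : 1 ≤ d)
    (ρ : Matrix (Fin dA × Fin d) (Fin dA × Fin d) ℂ)
    (hρsep : IsSeparable dA d ρ) (hρtr : ρ.trace = 1) :
    ∀ δ : ℝ, 0 < δ → ∃ N : ℕ, 1 ≤ N ∧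
      ∃ σ, MemStildeN dA d N σ ∧ σ.trace = 1 ∧ traceNorm (ρ - σ) < δ := by
  intro δ hδ
  classical
  set W : Matrix (Fin dA × Fin d) (Fin dA × Fin d) ℂ :=
    (d:ℂ) • ρ - trB ρ ⊗ₖ (1 : Matrix (Fin d) (Fin d) ℂ) with hW
  set C := traceNorm W with hC
  have hC0 : 0 ≤ C := by
    rw [hC]
    unfold traceNorm
    have h1 := trace_nonneg_of_psd (psdSqrt_posSemidef (Matrix.posSemidef_self_mul_conjTranspose W))
    exact (Complex.le_def.mp h1).1
  refine ⟨max 1 (⌈C/δ⌉₊ + 1), le_max_left _ _, ?_⟩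
  set N := max 1 (⌈C/δ⌉₊ + 1) with hN
  have hd1 : (1:ℝ) ≤ (d:ℝ) := by exact_mod_cast hd
  have hNd : (0:ℝ) < (N:ℝ) + d := by
    have := Nat.cast_nonneg (α := ℝ) N
    linarith
  have hNdC : ((N:ℂ) + d) ≠ 0 := by
    have h1 : ((N:ℂ) + d) = (((N + d : ℕ) : ℝ) : ℂ) := by push_cast; ring
    rw [h1]
    intro hcon
    have : ((N + d : ℕ) : ℝ) = 0 := by exact_mod_cast hcon
    have : ((N:ℝ) + d) = 0 := by push_cast at this ⊢; linarith
    linarith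
  set σ := ((N : ℂ) / ((N : ℂ) + d)) • ρ +
      (1 / ((N : ℂ) + d)) • (trB ρ ⊗ₖ (1 : Matrix (Fin d) (Fin d) ℂ)) with hσ
  refine ⟨σ, ⟨ρ, memSN_of_isSeparable hρsep, hσ⟩, ?_, ?_⟩
  · rw [hσ, Matrix.trace_add, Matrix.trace_smul, Matrix.trace_smul, Matrix.trace_kronecker,
      trace_trB, hρtr, Matrix.trace_one]
    simp only [smul_eq_mul, mul_one, Fintype.card_fin]
    field_simp
  · have hsub : ρ - σ = ((((N:ℝ)+d)⁻¹ : ℝ) : ℂ) • W := by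
      rw [hσ, hW]
      ext p q
      simp only [Matrix.sub_apply, Matrix.add_apply, Matrix.smul_apply, smul_eq_mul]
      push_cast
      field_simp
      ring
    rw [hsub, traceNorm_real_smul _ (le_of_lt (inv_pos.mpr hNd)), ← hC]
    have hCN : C / δ < (N:ℝ) := by
      have h1 : C/δ ≤ (⌈C/δ⌉₊ : ℝ) := Nat.le_ceil _
      have h2 : ⌈C/δ⌉₊ < N := Nat.lt_of_lt_of_le (Nat.lt_succ_self _) (le_max_right 1 _)
      have h2' : ((⌈C/δ⌉₊ : ℕ) : ℝ) < (N:ℝ) := by exact_mod_cast h2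
      linarith
    have hlt : C < δ * ((N:ℝ) + d) := by
      have h3 : C < (N:ℝ) * δ := (div_lt_iff₀ hδ).mp hCN
      nlinarith
    calc ((N:ℝ)+d)⁻¹ * C = C / ((N:ℝ)+d) := by ring
    _ < δ := by rw [div_lt_iff₀ hNd]; linarith

end SepPaper
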